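/- Let (M, R), (N, L), (H, W) be Noetherian confluent MRS with normal-form functions nf_R, nf_L, nf_W, and let φ : (M, R) → (N, L) and ψ : (N, L) → (H, W) be MRS-homomorphisms. Then (ψ ∘ φ)♯ = ψ♯ ∘ φ♯: for every irreducible u ∈ M, nf_W (ψ (φ u)) = nf_W (ψ (nf_L (φ u))). -/
import Mathlib


namespace MRS

/-- One-step rewriting relation of an MRS `(M, R)`. -/
def Step {M : Type*} [Monoid M] (R : M → M → Prop) (a b : M) : Prop :=
  ∃ x y s t : M, a = x * s * y ∧ b = x * t * y ∧ R s t

/-- An element is irreducible for a relation if it only rewrites to itself. -/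
def IrredRel {α : Type*} (r : α → α → Prop) (a : α) : Prop :=
  ∀ b, r a b → a = b

/-- A relation is Noetherian if there is no infinite chain of non-trivial steps. -/
def NoetherianRel {α : Type*} (r : α → α → Prop) : Prop :=
  ¬ ∃ f : ℕ → α, ∀ n, r (f n) (f (n + 1)) ∧ f n ≠ f (n + 1)

/-- Confluence of a relation. -/
def ConfluentRel {α : Type*} (r : α → α → Prop) : Prop :=
  ∀ u a b : α, Relation.ReflTransGen r u a → Relation.ReflTransGen r u b →
    ∃ c, Relation.ReflTransGen r a c ∧ Relation.ReflTransGen r b c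

/-- `nf` is a normal-form function for the MRS `(M, R)`. -/
def IsNF {M : Type*} [Monoid M] (R : M → M → Prop) (nf : M → M) : Prop :=
  ∀ u, Relation.ReflTransGen (Step R) u (nf u) ∧ IrredRel (Step R) (nf u)

end MRS

open MRS

/-- Reachability is compatible with left/right multiplication. -/
lemma rtg_mul {N : Type*} [Monoid N] {L : N → N → Prop} {a b : N}
    (h : Relation.ReflTransGen (Step L) a b) (x y : N) :
    Relation.ReflTransGen (Step L) (x * a * y) (x * b * y) := by
  induction h with
  | refl => exact Relation.ReflTransGen.refl
  | tail _ hst ih =>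
    rename_i b c
    obtain ⟨p, q, s, t, hb, hc, hst⟩ := hst
    refine ih.tail ⟨x * p, q * y, s, t, ?_, ?_, hst⟩
    · rw [hb]; simp [mul_assoc]
    · rw [hc]; simp [mul_assoc]

/-- A homomorphism maps one step to reachability. -/
lemma hom_step {N K : Type*} [Monoid N] [Monoid K] {L : N → N → Prop}
    {W : K → K → Prop} (ψ : N →* K)
    (hψ : ∀ u v : N, L u v → Relation.ReflTransGen (Step W) (ψ u) (ψ v))
    {a b : N} (h : Relation.ReflTransGen (Step L) a b) :
    Relation.ReflTransGen (Step W) (ψ a) (ψ b) := by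
  induction h with
  | refl => exact Relation.ReflTransGen.refl
  | tail _ hst ih =>
    obtain ⟨x, y, s, t, ha, hb, hst⟩ := hst
    refine ih.trans ?_
    rw [ha, hb, map_mul, map_mul, map_mul, map_mul]
    exact rtg_mul (hψ s t hst) (ψ x) (ψ y)

lemma irred_rtg {α : Type*} {r : α → α → Prop} {a b : α}
    (ha : IrredRel r a) (h : Relation.ReflTransGen r a b) : a = b := by
  induction h with
  | refl => rfl
  | tail _ hst ih => rw [ih] at ha ⊢; exact ha _ hst
/-- `(ψ ∘ φ)♯ = ψ♯ ∘ φ♯`. -/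
theorem stmt_7 {M N H : Type*} [Monoid M] [Monoid N] [Monoid H]
    (R : M → M → Prop) (L : N → N → Prop) (W : H → H → Prop)
    (hNoethR : NoetherianRel (Step R)) (hConfR : ConfluentRel (Step R))
    (hNoethL : NoetherianRel (Step L)) (hConfL : ConfluentRel (Step L))
    (hNoethW : NoetherianRel (Step W)) (hConfW : ConfluentRel (Step W))
    (nfR : M → M) (hnfR : IsNF R nfR) (nfL : N → N) (hnfL : IsNF L nfL)
    (nfW : H → H) (hnfW : IsNF W nfW)
    (φ : M →* N)
    (hφ : ∀ u v : M, R u v → Relation.ReflTransGen (Step L) (φ u) (φ v))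
    (ψ : N →* H)
    (hψ : ∀ u v : N, L u v → Relation.ReflTransGen (Step W) (ψ u) (ψ v)) :
    ∀ u : M, IrredRel (Step R) u → nfW (ψ (φ u)) = nfW (ψ (nfL (φ u))) := by

  intro u _
  have h1 : Relation.ReflTransGen (Step W) (ψ (φ u)) (nfW (ψ (φ u))) := (hnfW _).1
  have h2 : Relation.ReflTransGen (Step W) (ψ (φ u)) (nfW (ψ (nfL (φ u)))) := by
    have hL : Relation.ReflTransGen (Step L) (φ u) (nfL (φ u)) := (hnfL _).1
    exact (hom_step ψ hψ hL).trans (hnfW _).1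
  obtain ⟨c, hc1, hc2⟩ := hConfW _ _ _ h1 h2
  rw [irred_rtg (hnfW _).2 hc1, irred_rtg (hnfW _).2 hc2]
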